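/- (Demiclosedness principle, used in the proof of Proposition 2.1.) Let H be a real Hilbert space, C a nonempty closed convex subset of H, and T : C → C a nonexpansive map. If (x_n) is a sequence in C converging weakly to x ∈ H and ‖x_n − T(x_n)‖ → 0, then x ∈ C and T x = x. -/

import Mathlib

open Filter

/-- demiclosedness principle for nonexpansive maps in Hilbert space. -/
theorem stmt5 {H : Type*} [NormedAddCommGroup H] [InnerProductSpace ℝ H] [CompleteSpace H]
    (C : Set H) (hC_ne : C.Nonempty) (hC_closed : IsClosed C) (hC_convex : Convex ℝ C)
    (T : H → H) (hT_maps : ∀ x ∈ C, T x ∈ C)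
    (hT_nonexp : ∀ x ∈ C, ∀ y ∈ C, ‖T x - T y‖ ≤ ‖x - y‖)
    (x : ℕ → H) (hx_mem : ∀ n, x n ∈ C) (x₀ : H)
    (hx_weak : ∀ y : H, Tendsto (fun n => (inner ℝ (x n) y : ℝ)) atTop (nhds (inner ℝ x₀ y)))
    (hx_reg : Tendsto (fun n => ‖x n - T (x n)‖) atTop (nhds 0)) :
    x₀ ∈ C ∧ T x₀ = x₀ := by
  -- Step 1: boundedness of the sequence via Banach–Steinhaus
  obtain ⟨M, hM⟩ : ∃ M, ∀ n, ‖x n‖ ≤ M := by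
    obtain ⟨M, hM⟩ := banach_steinhaus (g := fun n => innerSL ℝ (x n)) (fun y => by
      obtain ⟨c, hc⟩ := ((hx_weak y).norm).bddAbove_range
      exact ⟨c, fun n => by simpa using hc (Set.mem_range_self n)⟩)
    exact ⟨M, fun n => by simpa [innerSL_apply_norm] using hM n⟩
  -- Step 2: x₀ ∈ C via the projection onto C
  obtain ⟨v, hvC, hv⟩ :=
    exists_norm_eq_iInf_of_complete_convex hC_ne hC_closed.isComplete hC_convex x₀
  have hchar := (norm_eq_iInf_iff_real_inner_le_zero hC_convex hvC).mp hv
  have hx₀C : x₀ ∈ C := by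
    have hlim : Tendsto (fun n => (inner ℝ (x₀ - v) (x n - v) : ℝ)) atTop
        (nhds (inner ℝ (x₀ - v) (x₀ - v))) := by
      have heq : ∀ z : H, (inner ℝ (x₀ - v) (z - v) : ℝ)
          = inner ℝ z (x₀ - v) - inner ℝ v (x₀ - v) := by
        intro z
        rw [real_inner_comm, inner_sub_left]
      simp_rw [heq]
      exact (hx_weak (x₀ - v)).sub_const _
    have h0 : (inner ℝ (x₀ - v) (x₀ - v) : ℝ) ≤ 0 :=
      le_of_tendsto hlim (Filter.Eventually.of_forall fun n => hchar _ (hx_mem n))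
    have hnorm : ‖x₀ - v‖ = 0 := by
      rw [real_inner_self_eq_norm_sq] at h0
      nlinarith [norm_nonneg (x₀ - v)]
    have : x₀ = v := by
      have := norm_eq_zero.mp hnorm
      exact sub_eq_zero.mp this
    exact this ▸ hvC
  refine ⟨hx₀C, ?_⟩
  -- Step 3: T x₀ = x₀
  set y := x₀ - T x₀ with hy
  have key : ∀ n, 2 * (inner ℝ (x n - x₀) y : ℝ) + ‖y‖ ^ 2
      ≤ 2 * ‖x n - T (x n)‖ * (M + ‖x₀‖) + ‖x n - T (x n)‖ ^ 2 := by
    intro n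
    have hd : ‖x n - x₀‖ ≤ M + ‖x₀‖ := (norm_sub_le _ _).trans (by linarith [hM n])
    have h1 : ‖x n - T x₀‖ ≤ ‖x n - T (x n)‖ + ‖x n - x₀‖ := by
      calc ‖x n - T x₀‖ = ‖(x n - T (x n)) + (T (x n) - T x₀)‖ := by abel_nf
        _ ≤ ‖x n - T (x n)‖ + ‖T (x n) - T x₀‖ := norm_add_le _ _
        _ ≤ ‖x n - T (x n)‖ + ‖x n - x₀‖ := by
            linarith [hT_nonexp (x n) (hx_mem n) x₀ hx₀C]
    have h2 : ‖x n - T x₀‖ ^ 2 ≤ (‖x n - T (x n)‖ + ‖x n - x₀‖) ^ 2 :=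
      pow_le_pow_left₀ (norm_nonneg _) h1 2
    have h3 : ‖x n - T x₀‖ ^ 2 = ‖x n - x₀‖ ^ 2 + 2 * inner ℝ (x n - x₀) y + ‖y‖ ^ 2 := by
      have hxy : x n - T x₀ = (x n - x₀) + y := by rw [hy]; abel
      rw [hxy, norm_add_sq_real]
    nlinarith [h2, h3, hd, norm_nonneg (x n - T (x n)), norm_nonneg (x n - x₀),
      mul_le_mul_of_nonneg_left hd (norm_nonneg (x n - T (x n)))]
  have hlimL : Tendsto (fun n => 2 * (inner ℝ (x n - x₀) y : ℝ) + ‖y‖ ^ 2) atTop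
      (nhds (‖y‖ ^ 2)) := by
    have h0 : Tendsto (fun n => (inner ℝ (x n - x₀) y : ℝ)) atTop (nhds 0) := by
      have := (hx_weak y).sub_const (inner ℝ x₀ y)
      simpa [inner_sub_left] using this
    have := (h0.const_mul 2).add_const (‖y‖ ^ 2)
    simpa using this
  have hlimR : Tendsto (fun n => 2 * ‖x n - T (x n)‖ * (M + ‖x₀‖) + ‖x n - T (x n)‖ ^ 2)
      atTop (nhds 0) := by
    have h1 := (hx_reg.const_mul 2).mul_const (M + ‖x₀‖)
    have h2 := hx_reg.pow 2
    simpa using h1.add h2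
  have hle : ‖y‖ ^ 2 ≤ 0 := le_of_tendsto_of_tendsto' hlimL hlimR key
  have hy0 : ‖y‖ = 0 := by nlinarith [norm_nonneg y]
  have : x₀ - T x₀ = 0 := norm_eq_zero.mp hy0
  exact (sub_eq_zero.mp this).symm
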